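/- Let f be differentiable on an interval containing [u,v] with 0 ≤ u < v, f' integrable, |f'|^r s-convex in the second sense on [u,v] for s ∈ (0,1], p, r > 1 with 1/p + 1/r = 1, and suppose (f(u)+f(v))/2 = f((u+v)/2). Then |(f(u)+f(v))/2 - (1/(v-u)) ∫ᵤᵛ f(x) dx| ≤ ((v-u)/(8(p+1)^(1/p))) · [(((2^(s+1)-1)/(2^s(s+1))) |f'(u)|^r + (1/(2^s(s+1))) |f'(v)|^r)^(1/r) + ((1/(2^s(s+1))) |f'(u)|^r + ((2^(s+1)-1)/(2^s(s+1))) |f'(v)|^r)^(1/r)]. -/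

import Mathlib

open MeasureTheory intervalIntegral

/-- `g` is s-convex in the second sense on `[u, v]`. -/
def SConvexSecond (s u v : ℝ) (g : ℝ → ℝ) : Prop :=
  ∀ x ∈ Set.Icc u v, ∀ y ∈ Set.Icc u v, ∀ a ∈ Set.Icc (0:ℝ) 1,
    g (a * x + (1 - a) * y) ≤ a ^ s * g x + (1 - a) ^ s * g y

lemma parts_aux (f f' : ℝ → ℝ) (u v a b c : ℝ) (hd : ∀ x ∈ Set.Icc u v, HasDerivAt f (f' x) x)
    (hint : IntervalIntegrable f' volume u v) (huv : u ≤ v) (hsub : Set.uIcc a b ⊆ Set.Icc u v) :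
    ∫ x in a..b, (x - c) * f' x = (b - c) * f b - (a - c) * f a - ∫ x in a..b, f x := by
  have h := intervalIntegral.integral_mul_deriv_eq_deriv_mul
    (u := fun x => x - c) (u' := fun _ => (1:ℝ)) (v := f) (v' := f')
    (fun x _ => (hasDerivAt_id x).sub_const c) (fun x hx => hd x (hsub hx))
    intervalIntegrable_const (hint.mono_set (by rwa [Set.uIcc_of_le huv]))
  simpa using h

lemma int_rpow_sub_left (a b c t : ℝ) (ht : -1 < t) :
    ∫ x in a..b, (c - x) ^ t = ((c - a) ^ (t+1) - (c - b) ^ (t+1)) / (t+1) := by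
  rw [intervalIntegral.integral_comp_sub_left (fun y => y ^ t) c,
    integral_rpow (Or.inl ht)]

lemma int_rpow_sub_right (a b c t : ℝ) (ht : -1 < t) :
    ∫ x in a..b, (x - c) ^ t = ((b - c) ^ (t+1) - (a - c) ^ (t+1)) / (t+1) := by
  rw [intervalIntegral.integral_comp_sub_right (fun y => y ^ t) c,
    integral_rpow (Or.inl ht)]

lemma int_abs_rpow (c h t : ℝ) (hh : 0 ≤ h) (ht : 0 < t) :
    ∫ x in (c - h)..(c + h), |x - c| ^ t = 2 * h ^ (t+1) / (t+1) := by
  have hcont : Continuous fun x : ℝ => |x - c| ^ t :=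
    ((continuous_id.sub continuous_const).abs).rpow_const (fun x => Or.inr ht.le)
  have h1 : ∫ x in (c - h)..c, |x - c| ^ t = h ^ (t+1) / (t+1) := by
    have : ∫ x in (c - h)..c, |x - c| ^ t = ∫ x in (c - h)..c, (c - x) ^ t := by
      apply intervalIntegral.integral_congr
      intro x hx
      rw [Set.uIcc_of_le (by linarith), Set.mem_Icc] at hx
      show |x - c| ^ t = (c - x) ^ t
      rw [abs_of_nonpos (by linarith), neg_sub]
    rw [this, int_rpow_sub_left _ _ _ _ (by linarith)]
    rw [show c - (c - h) = h by ring, sub_self, Real.zero_rpow (by linarith)]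
    ring
  have h2 : ∫ x in c..(c + h), |x - c| ^ t = h ^ (t+1) / (t+1) := by
    have : ∫ x in c..(c + h), |x - c| ^ t = ∫ x in c..(c + h), (x - c) ^ t := by
      apply intervalIntegral.integral_congr
      intro x hx
      rw [Set.uIcc_of_le (by linarith), Set.mem_Icc] at hx
      show |x - c| ^ t = (x - c) ^ t
      rw [abs_of_nonneg (by linarith)]
    rw [this, int_rpow_sub_right _ _ _ _ (by linarith)]
    rw [show c + h - c = h by ring, sub_self, Real.zero_rpow (by linarith)]
    ring
  rw [← intervalIntegral.integral_add_adjacent_intervals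
    (hcont.intervalIntegrable _ _) (hcont.intervalIntegrable _ _), h1, h2]
  ring

lemma holder_step (g φ : ℝ → ℝ) (a b p r : ℝ) (hab : a ≤ b) (hp : 1 < p) (hpr : 1/p + 1/r = 1)
    (hg : Continuous g) (hφm : AEStronglyMeasurable φ (volume.restrict (Set.Ioc a b)))
    (M N : ℝ) (hM : ∀ x ∈ Set.Ioc a b, |g x| ≤ M) (hN : ∀ x ∈ Set.Ioc a b, |φ x| ≤ N) :
    |∫ x in a..b, g x * φ x| ≤
      (∫ x in a..b, |g x| ^ p) ^ (1/p) * (∫ x in a..b, |φ x| ^ r) ^ (1/r) := by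
  have hpq : Real.HolderConjugate p r := Real.holderConjugate_iff.2 ⟨hp, by rw [← one_div, ← one_div]; exact hpr⟩
  have hK : MemLp g (ENNReal.ofReal p) (volume.restrict (Set.Ioc a b)) :=
    MemLp.of_bound hg.aestronglyMeasurable M
      (by filter_upwards [ae_restrict_mem measurableSet_Ioc] with x hx;
          simpa [Real.norm_eq_abs] using hM x hx)
  have hφ : MemLp φ (ENNReal.ofReal r) (volume.restrict (Set.Ioc a b)) :=
    MemLp.of_bound hφm N
      (by filter_upwards [ae_restrict_mem measurableSet_Ioc] with x hx;
          simpa [Real.norm_eq_abs] using hN x hx)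
  calc |∫ x in a..b, g x * φ x| ≤ ∫ x in a..b, |g x * φ x| :=
        intervalIntegral.abs_integral_le_integral_abs hab
    _ = ∫ x in Set.Ioc a b, ‖g x‖ * ‖φ x‖ := by
        rw [intervalIntegral.integral_of_le hab]
        simp [abs_mul, Real.norm_eq_abs]
    _ ≤ (∫ x in Set.Ioc a b, ‖g x‖ ^ p) ^ (1/p) * (∫ x in Set.Ioc a b, ‖φ x‖ ^ r) ^ (1/r) :=
        integral_mul_norm_le_Lp_mul_Lq hpq hK hφ
    _ = (∫ x in a..b, |g x| ^ p) ^ (1/p) * (∫ x in a..b, |φ x| ^ r) ^ (1/r) := by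
        rw [intervalIntegral.integral_of_le hab, intervalIntegral.integral_of_le hab]
        simp [Real.norm_eq_abs]

lemma coeff_eq (w p r : ℝ) (hw : 0 < w) (hp : 1 < p) (hr : 1 < r) (hpr : 1/p + 1/r = 1) :
    (1/w) * ((2 * (w/4) ^ (p+1) / (p+1)) ^ (1/p) * (w/2) ^ (1/r)) = w / (8 * (p+1) ^ (1/p)) := by
  have hp0 : 0 < p := by linarith
  have hr0 : 0 < r := by linarith
  have hq : (0:ℝ) < p + 1 := by linarith
  have hw4 : 0 < w / 4 := by linarith
  have step1 : (2 * (w/4) ^ (p+1) / (p+1)) ^ (1/p)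
      = 2 ^ (1/p) * ((w/4) ^ (p+1)) ^ (1/p) / (p+1) ^ (1/p) := by
    rw [Real.div_rpow (by positivity) hq.le, Real.mul_rpow (by norm_num) (by positivity)]
  have step2 : ((w/4) ^ (p+1)) ^ (1/p) = (w/4) * (w/4) ^ (1/p) := by
    rw [← Real.rpow_mul hw4.le, show (p+1) * (1/p) = 1 + 1/p by field_simp,
      Real.rpow_add hw4, Real.rpow_one]
  have step3 : (w/4 : ℝ) ^ (1/p) = w ^ (1/p) / (2 ^ (1/p) * 2 ^ (1/p)) := by
    rw [Real.div_rpow hw.le (by norm_num), ← Real.mul_rpow (by norm_num) (by norm_num)]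
    norm_num
  have step4 : (w/2 : ℝ) ^ (1/r) = w ^ (1/r) / 2 ^ (1/r) := by
    rw [Real.div_rpow hw.le (by norm_num : (0:ℝ) ≤ 2)]
  have hab : (2:ℝ) ^ (1/p) * 2 ^ (1/r) = 2 := by
    rw [← Real.rpow_add two_pos, hpr, Real.rpow_one]
  have hww : w ^ (1/p) * w ^ (1/r) = w := by
    rw [← Real.rpow_add hw, hpr, Real.rpow_one]
  have ha : (0:ℝ) < 2 ^ (1/p) := by positivity
  have hwp : (0:ℝ) < w ^ (1/p) := by positivity
  have hc : (0:ℝ) < (p+1) ^ (1/p) := by positivity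
  have hb : (2:ℝ) ^ (1/r) = 2 / 2 ^ (1/p) := by
    field_simp at hab ⊢; linarith [hab]
  have hwr : w ^ (1/r) = w / w ^ (1/p) := by
    field_simp at hww ⊢; linarith [hww]
  rw [step1, step2, step3, step4, hb, hwr]
  field_simp
  ring

lemma scal1 (w s : ℝ) (hw : 0 < w) (hs0 : 0 < s) :
    ((w ^ (s+1) - (w/2) ^ (s+1)) / (s+1)) / w ^ s
      = (w/2) * ((2 ^ (s+1) - 1)/(2 ^ s * (s+1))) := by
  have h2s : (0:ℝ) < 2 ^ s := Real.rpow_pos_of_pos two_pos s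
  have hws : (0:ℝ) < w ^ s := Real.rpow_pos_of_pos hw s
  have hs1 : s + 1 ≠ 0 := by linarith
  rw [Real.rpow_add hw, Real.rpow_one, Real.rpow_add (by positivity : (0:ℝ) < w/2),
    Real.rpow_one, Real.div_rpow hw.le (by norm_num), Real.rpow_add two_pos, Real.rpow_one]
  field_simp

lemma scal2 (w s : ℝ) (hw : 0 < w) (hs0 : 0 < s) :
    ((w/2) ^ (s+1) / (s+1)) / w ^ s = (w/2) * (1/(2 ^ s * (s+1))) := by
  have h2s : (0:ℝ) < 2 ^ s := Real.rpow_pos_of_pos two_pos s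
  have hws : (0:ℝ) < w ^ s := Real.rpow_pos_of_pos hw s
  have hs1 : s + 1 ≠ 0 := by linarith
  rw [Real.rpow_add (by positivity : (0:ℝ) < w/2), Real.rpow_one,
    Real.div_rpow hw.le (by norm_num)]
  field_simp

set_option maxHeartbeats 1000000 in
theorem stmt_8 (f f' : ℝ → ℝ) (u v p r s : ℝ) (hu : 0 ≤ u) (huv : u < v)
    (hs : s ∈ Set.Ioc (0:ℝ) 1) (hp : 1 < p) (hr : 1 < r) (hpr : 1 / p + 1 / r = 1)
    (hd : ∀ x ∈ Set.Icc u v, HasDerivAt f (f' x) x)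
    (hint : IntervalIntegrable f' volume u v)
    (hsc : SConvexSecond s u v (fun x => |f' x| ^ r))
    (hmid : (f u + f v) / 2 = f ((u + v) / 2)) :
    |(f u + f v) / 2 - (1 / (v - u)) * ∫ x in u..v, f x|
      ≤ ((v - u) / (8 * (p + 1) ^ (1 / p))) *
          ((((2 ^ (s + 1) - 1) / (2 ^ s * (s + 1))) * |f' u| ^ r
              + (1 / (2 ^ s * (s + 1))) * |f' v| ^ r) ^ (1 / r)
            + ((1 / (2 ^ s * (s + 1))) * |f' u| ^ r
              + ((2 ^ (s + 1) - 1) / (2 ^ s * (s + 1))) * |f' v| ^ r) ^ (1 / r)) := by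
  obtain ⟨hs0, hs1⟩ := hs
  have hr0 : (0:ℝ) < r := by linarith
  have hp0 : (0:ℝ) < p := by linarith
  have hw : (0:ℝ) < v - u := sub_pos.2 huv
  set m : ℝ := (u + v)/2 with hm
  have hum : u ≤ m := by rw [hm]; linarith
  have hmv : m ≤ v := by rw [hm]; linarith
  set A : ℝ := |f' u| ^ r with hA
  set B : ℝ := |f' v| ^ r with hB
  have hA0 : 0 ≤ A := by rw [hA]; positivity
  have hB0 : 0 ≤ B := by rw [hB]; positivity
  set D : ℝ := (2 ^ (s+1) - 1)/(2 ^ s * (s+1)) with hD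
  set E : ℝ := (1:ℝ)/(2 ^ s * (s+1)) with hE
  have h21 : (1:ℝ) ≤ 2 ^ (s+1) := by
    rw [show (1:ℝ) = 2 ^ (0:ℝ) by simp]
    exact Real.rpow_le_rpow_left_iff one_lt_two |>.2 (by linarith)
  have h2s : (0:ℝ) < 2 ^ s := Real.rpow_pos_of_pos two_pos s
  have hD0 : 0 ≤ D := by
    rw [hD]; apply div_nonneg (by linarith) (by positivity)
  have hE0 : 0 ≤ E := by
    rw [hE]; positivity
  -- continuity / integrability of f
  have hfc : ContinuousOn f (Set.Icc u v) := fun x hx => (hd x hx).continuousAt.continuousWithinAt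
  have hfi1 : IntervalIntegrable f volume u m :=
    (hfc.mono (by rw [Set.uIcc_of_le hum]; exact Set.Icc_subset_Icc le_rfl hmv)).intervalIntegrable
  have hfi2 : IntervalIntegrable f volume m v :=
    (hfc.mono (by rw [Set.uIcc_of_le hmv]; exact Set.Icc_subset_Icc hum le_rfl)).intervalIntegrable
  -- integration by parts on the two halves
  have hI1 := parts_aux f f' u v u m ((3*u+v)/4) hd hint huv.le
    (by rw [Set.uIcc_of_le hum]; exact Set.Icc_subset_Icc le_rfl hmv)
  have hI2 := parts_aux f f' u v m v ((u+3*v)/4) hd hint huv.le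
    (by rw [Set.uIcc_of_le hmv]; exact Set.Icc_subset_Icc hum le_rfl)
  have hfm : f m = (f u + f v)/2 := by rw [hm, ← hmid]
  -- the identity
  have hiden : (f u + f v) / 2 - (1 / (v - u)) * ∫ x in u..v, f x
      = (1/(v-u)) * ((∫ x in u..m, (x - (3*u+v)/4) * f' x)
          + (∫ x in m..v, (x - (u+3*v)/4) * f' x)) := by
    rw [hI1, hI2, ← intervalIntegral.integral_add_adjacent_intervals hfi1 hfi2, hfm, hm]
    have hvu : v - u ≠ 0 := ne_of_gt hw
    field_simp
    ring
  -- measurability of f'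
  have hmeas : AEStronglyMeasurable f' (volume.restrict (Set.Ioc u v)) :=
    hint.1.aestronglyMeasurable
  -- pointwise s-convexity bound
  have hconv : ∀ x ∈ Set.Icc u v,
      |f' x| ^ r ≤ ((v-x)/(v-u)) ^ s * A + ((x-u)/(v-u)) ^ s * B := by
    intro x hx
    obtain ⟨hx1, hx2⟩ := hx
    have ha1 : 0 ≤ (v-x)/(v-u) := div_nonneg (by linarith) hw.le
    have ha2 : (v-x)/(v-u) ≤ 1 := (div_le_one hw).2 (by linarith)
    have h1a : 1 - (v-x)/(v-u) = (x-u)/(v-u) := by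
      field_simp
      ring
    have hcomb : (v-x)/(v-u) * u + (1 - (v-x)/(v-u)) * v = x := by
      field_simp
      ring
    have h := hsc u ⟨le_refl u, huv.le⟩ v ⟨huv.le, le_refl v⟩ ((v-x)/(v-u)) ⟨ha1, ha2⟩
    rw [hcomb, h1a] at h
    rw [hA, hB]
    simpa using h
  -- global bound on |f'| ^ r and |f'|
  have hABd : ∀ x ∈ Set.Icc u v, |f' x| ^ r ≤ A + B := by
    intro x hx
    refine le_trans (hconv x hx) ?_
    obtain ⟨hx1, hx2⟩ := hx
    have g1 : ((v-x)/(v-u)) ^ s ≤ 1 :=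
      Real.rpow_le_one (div_nonneg (by linarith) hw.le) ((div_le_one hw).2 (by linarith)) hs0.le
    have g2 : ((x-u)/(v-u)) ^ s ≤ 1 :=
      Real.rpow_le_one (div_nonneg (by linarith) hw.le) ((div_le_one hw).2 (by linarith)) hs0.le
    nlinarith [mul_le_of_le_one_left hA0 g1, mul_le_of_le_one_left hB0 g2]
  have hNb : ∀ x ∈ Set.Ioc u v, |f' x| ≤ (A + B) ^ (1/r) := by
    intro x hx
    have hx' : x ∈ Set.Icc u v := Set.Ioc_subset_Icc_self hx
    have h1 : (|f' x| ^ r) ^ (1/r) ≤ (A + B) ^ (1/r) :=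
      Real.rpow_le_rpow (by positivity) (hABd x hx') (by positivity)
    rwa [← Real.rpow_mul (abs_nonneg _), mul_one_div, div_self (ne_of_gt hr0),
      Real.rpow_one] at h1
  -- integrability of |f'| ^ r on subintervals
  have hFi : ∀ a b : ℝ, a ≤ b → Set.Ioc a b ⊆ Set.Ioc u v →
      IntervalIntegrable (fun x => |f' x| ^ r) volume a b := by
    intro a b hab hsub
    rw [intervalIntegrable_iff_integrableOn_Ioc_of_le hab]
    refine Integrable.mono' (integrable_const (A + B)) ?_ ?_
    · exact (((hmeas.mono_measure (Measure.restrict_mono hsub le_rfl)).norm.aemeasurable.pow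
        aemeasurable_const).aestronglyMeasurable)
    · filter_upwards [ae_restrict_mem measurableSet_Ioc] with x hx
      have hx' : x ∈ Set.Icc u v := Set.Ioc_subset_Icc_self (hsub hx)
      rw [Real.norm_eq_abs, abs_of_nonneg (by positivity)]
      exact hABd x hx'
  have hsub1 : Set.Ioc u m ⊆ Set.Ioc u v := Set.Ioc_subset_Ioc le_rfl hmv
  have hsub2 : Set.Ioc m v ⊆ Set.Ioc u v := Set.Ioc_subset_Ioc hum le_rfl
  -- continuity of the comparison functions
  have hc1 : Continuous fun x : ℝ => ((v-x)/(v-u)) ^ s :=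
    ((continuous_const.sub continuous_id).div_const _).rpow_const (fun x => Or.inr hs0.le)
  have hc2 : Continuous fun x : ℝ => ((x-u)/(v-u)) ^ s :=
    ((continuous_id.sub continuous_const).div_const _).rpow_const (fun x => Or.inr hs0.le)
  -- integral bounds from s-convexity
  have hB1 : ∫ x in u..m, |f' x| ^ r ≤ ((v-u)/2) * (D*A + E*B) := by
    have hmono := intervalIntegral.integral_mono_on hum (hFi u m hum hsub1)
      (((hc1.mul continuous_const).add (hc2.mul continuous_const)).intervalIntegrable u m)
      (fun x hx => hconv x (Set.Icc_subset_Icc le_rfl hmv hx))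
    refine le_trans hmono ?_
    simp only [Pi.add_apply, Pi.mul_apply]
    rw [intervalIntegral.integral_add (by exact (hc1.mul continuous_const).intervalIntegrable u m)
      (by exact (hc2.mul continuous_const).intervalIntegrable u m),
      intervalIntegral.integral_mul_const, intervalIntegral.integral_mul_const]
    have e1 : ∫ x in u..m, ((v-x)/(v-u)) ^ s = (v-u)/2 * D := by
      have ec : ∫ x in u..m, ((v-x)/(v-u)) ^ s = ∫ x in u..m, (v-x) ^ s / (v-u) ^ s := by
        apply intervalIntegral.integral_congr
        intro x hx
        rw [Set.uIcc_of_le hum, Set.mem_Icc] at hx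
        show ((v-x)/(v-u)) ^ s = (v-x) ^ s / (v-u) ^ s
        rw [Real.div_rpow (by rw [hm] at hx; linarith [hx.2]) hw.le]
      rw [ec, intervalIntegral.integral_div, int_rpow_sub_left u m v s (by linarith),
        show v - m = (v-u)/2 by rw [hm]; ring]
      rw [hD]
      exact scal1 (v-u) s hw hs0
    have e2 : ∫ x in u..m, ((x-u)/(v-u)) ^ s = (v-u)/2 * E := by
      have ec : ∫ x in u..m, ((x-u)/(v-u)) ^ s = ∫ x in u..m, (x-u) ^ s / (v-u) ^ s := by
        apply intervalIntegral.integral_congr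
        intro x hx
        rw [Set.uIcc_of_le hum, Set.mem_Icc] at hx
        show ((x-u)/(v-u)) ^ s = (x-u) ^ s / (v-u) ^ s
        rw [Real.div_rpow (by linarith [hx.1]) hw.le]
      rw [ec, intervalIntegral.integral_div, int_rpow_sub_right u m u s (by linarith),
        show m - u = (v-u)/2 by rw [hm]; ring, sub_self, Real.zero_rpow (by linarith), sub_zero]
      rw [hE]
      exact scal2 (v-u) s hw hs0
    rw [e1, e2]
    exact le_of_eq (by ring)
  have hB2 : ∫ x in m..v, |f' x| ^ r ≤ ((v-u)/2) * (E*A + D*B) := by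
    have hmono := intervalIntegral.integral_mono_on hmv (hFi m v hmv hsub2)
      (((hc1.mul continuous_const).add (hc2.mul continuous_const)).intervalIntegrable m v)
      (fun x hx => hconv x (Set.Icc_subset_Icc hum le_rfl hx))
    refine le_trans hmono ?_
    simp only [Pi.add_apply, Pi.mul_apply]
    rw [intervalIntegral.integral_add (by exact (hc1.mul continuous_const).intervalIntegrable m v)
      (by exact (hc2.mul continuous_const).intervalIntegrable m v),
      intervalIntegral.integral_mul_const, intervalIntegral.integral_mul_const]
    have e1 : ∫ x in m..v, ((v-x)/(v-u)) ^ s = (v-u)/2 * E := by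
      have ec : ∫ x in m..v, ((v-x)/(v-u)) ^ s = ∫ x in m..v, (v-x) ^ s / (v-u) ^ s := by
        apply intervalIntegral.integral_congr
        intro x hx
        rw [Set.uIcc_of_le hmv, Set.mem_Icc] at hx
        show ((v-x)/(v-u)) ^ s = (v-x) ^ s / (v-u) ^ s
        rw [Real.div_rpow (by linarith [hx.2]) hw.le]
      rw [ec, intervalIntegral.integral_div, int_rpow_sub_left m v v s (by linarith),
        show v - m = (v-u)/2 by rw [hm]; ring, sub_self, Real.zero_rpow (by linarith), sub_zero]
      rw [hE]
      exact scal2 (v-u) s hw hs0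
    have e2 : ∫ x in m..v, ((x-u)/(v-u)) ^ s = (v-u)/2 * D := by
      have ec : ∫ x in m..v, ((x-u)/(v-u)) ^ s = ∫ x in m..v, (x-u) ^ s / (v-u) ^ s := by
        apply intervalIntegral.integral_congr
        intro x hx
        rw [Set.uIcc_of_le hmv, Set.mem_Icc] at hx
        show ((x-u)/(v-u)) ^ s = (x-u) ^ s / (v-u) ^ s
        rw [Real.div_rpow (by rw [hm] at hx; linarith [hx.1]) hw.le]
      rw [ec, intervalIntegral.integral_div, int_rpow_sub_right m v u s (by linarith),
        show m - u = (v-u)/2 by rw [hm]; ring]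
      rw [hD]
      exact scal1 (v-u) s hw hs0
    rw [e1, e2]
    exact le_of_eq (by ring)
  -- kernel integrals
  have hK1 : ∫ x in u..m, |x - (3*u+v)/4| ^ p = 2 * ((v-u)/4) ^ (p+1) / (p+1) := by
    have h := int_abs_rpow ((3*u+v)/4) ((v-u)/4) p (by linarith) hp0
    rw [show (3*u+v)/4 - (v-u)/4 = u by ring, show (3*u+v)/4 + (v-u)/4 = m by rw [hm]; ring] at h
    exact h
  have hK2 : ∫ x in m..v, |x - (u+3*v)/4| ^ p = 2 * ((v-u)/4) ^ (p+1) / (p+1) := by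
    have h := int_abs_rpow ((u+3*v)/4) ((v-u)/4) p (by linarith) hp0
    rw [show (u+3*v)/4 - (v-u)/4 = m by rw [hm]; ring,
      show (u+3*v)/4 + (v-u)/4 = v by ring] at h
    exact h
  -- Hölder on each half
  have hH1 := holder_step (fun x => x - (3*u+v)/4) f' u m p r hum hp hpr
    (continuous_id.sub continuous_const)
    (hmeas.mono_measure (Measure.restrict_mono hsub1 le_rfl))
    (v - u) ((A+B) ^ (1/r))
    (fun x hx => by
      have := hsub1 hx
      simp only [Set.mem_Ioc] at this
      rw [abs_le]; constructor <;> [linarith [this.1]; linarith [this.2]])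
    (fun x hx => hNb x (hsub1 hx))
  have hH2 := holder_step (fun x => x - (u+3*v)/4) f' m v p r hmv hp hpr
    (continuous_id.sub continuous_const)
    (hmeas.mono_measure (Measure.restrict_mono hsub2 le_rfl))
    (v - u) ((A+B) ^ (1/r))
    (fun x hx => by
      have := hsub2 hx
      simp only [Set.mem_Ioc] at this
      rw [abs_le]; constructor <;> [linarith [this.1]; linarith [this.2]])
    (fun x hx => hNb x (hsub2 hx))
  -- combine
  have hbase0 : (0:ℝ) ≤ 2 * ((v-u)/4) ^ (p+1) / (p+1) := by
    apply div_nonneg (mul_nonneg (by norm_num) (Real.rpow_nonneg (by linarith) _)) (by linarith)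
  have hC0 : (0:ℝ) ≤ (2 * ((v-u)/4) ^ (p+1) / (p+1)) ^ (1/p) := Real.rpow_nonneg hbase0 _
  have hP1 : |∫ x in u..m, (x - (3*u+v)/4) * f' x|
      ≤ (2 * ((v-u)/4) ^ (p+1) / (p+1)) ^ (1/p) * (((v-u)/2) ^ (1/r) * (D*A + E*B) ^ (1/r)) := by
    refine le_trans hH1 ?_
    rw [hK1]
    have hq1 : (∫ x in u..m, |f' x| ^ r) ^ (1/r) ≤ (((v-u)/2) * (D*A + E*B)) ^ (1/r) :=
      Real.rpow_le_rpow (intervalIntegral.integral_nonneg hum (fun x _ => by positivity))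
        hB1 (by positivity)
    rw [Real.mul_rpow (by linarith) (by positivity)] at hq1
    exact mul_le_mul_of_nonneg_left hq1 hC0
  have hP2 : |∫ x in m..v, (x - (u+3*v)/4) * f' x|
      ≤ (2 * ((v-u)/4) ^ (p+1) / (p+1)) ^ (1/p) * (((v-u)/2) ^ (1/r) * (E*A + D*B) ^ (1/r)) := by
    refine le_trans hH2 ?_
    rw [hK2]
    have hq1 : (∫ x in m..v, |f' x| ^ r) ^ (1/r) ≤ (((v-u)/2) * (E*A + D*B)) ^ (1/r) :=
      Real.rpow_le_rpow (intervalIntegral.integral_nonneg hmv (fun x _ => by positivity))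
        hB2 (by positivity)
    rw [Real.mul_rpow (by linarith) (by positivity)] at hq1
    exact mul_le_mul_of_nonneg_left hq1 hC0
  have hco := coeff_eq (v-u) p r hw hp hr hpr
  calc |(f u + f v) / 2 - (1 / (v - u)) * ∫ x in u..v, f x|
      = (1/(v-u)) * |(∫ x in u..m, (x - (3*u+v)/4) * f' x)
          + (∫ x in m..v, (x - (u+3*v)/4) * f' x)| := by
        rw [hiden, abs_mul, abs_of_pos (by positivity : (0:ℝ) < 1/(v-u))]
    _ ≤ (1/(v-u)) * (|∫ x in u..m, (x - (3*u+v)/4) * f' x|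
          + |∫ x in m..v, (x - (u+3*v)/4) * f' x|) := by
        apply mul_le_mul_of_nonneg_left (abs_add_le _ _) (by positivity)
    _ ≤ (1/(v-u)) * ((2 * ((v-u)/4) ^ (p+1) / (p+1)) ^ (1/p)
          * (((v-u)/2) ^ (1/r) * (D*A + E*B) ^ (1/r))
        + (2 * ((v-u)/4) ^ (p+1) / (p+1)) ^ (1/p)
          * (((v-u)/2) ^ (1/r) * (E*A + D*B) ^ (1/r))) := by
        apply mul_le_mul_of_nonneg_left (add_le_add hP1 hP2) (by positivity)
    _ = ((1/(v-u)) * ((2 * ((v-u)/4) ^ (p+1) / (p+1)) ^ (1/p) * ((v-u)/2) ^ (1/r)))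
          * ((D*A + E*B) ^ (1/r) + (E*A + D*B) ^ (1/r)) := by ring
    _ = ((v - u) / (8 * (p + 1) ^ (1 / p)))
          * ((D*A + E*B) ^ (1/r) + (E*A + D*B) ^ (1/r)) := by rw [hco]
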